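/- arXiv:2506.09000 — 2 statements merged into one kernel-verified Lean document; each statement's English description precedes it below -/
import Mathlib

section
/- The map Φ defined on {y ∈ [0,1]^V : ‖y‖ < 1} by Φ(0) = 0 and Φ(y) = ρ(y/‖y‖)·y for y ≠ 0 is a homeomorphism from {y ∈ [0,1]^V : ‖y‖ < 1} onto R(G), where both sets carry the subspace topology from ℝ^V. (Lemma 4.3(4).) -/
open scoped Classical ENNReal

set_option linter.unusedSectionVars false

variable {V : Type*} [Fintype V] [DecidableEq V]

/-- An admissible swap exchanges two consecutive letters that are adjacent in `G`. -/
def AdjSwap (G : SimpleGraph V) (w w' : List V) : Prop :=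
  ∃ (a b : List V) (u v : V), G.Adj u v ∧ w = a ++ u :: v :: b ∧ w' = a ++ v :: u :: b

/-- Two words are equivalent if one can be transformed into the other by finitely many
admissible swaps. -/
def WordEquiv (G : SimpleGraph V) : List V → List V → Prop :=
  Relation.ReflTransGen (AdjSwap G)

lemma adjSwap_symm (G : SimpleGraph V) : Symmetric (AdjSwap G) := by
  rintro w w' ⟨a, b, u, v, h, rfl, rfl⟩
  exact ⟨a, b, v, u, h.symm, rfl, rfl⟩

/-- The setoid of words modulo admissible swaps. -/
def wordSetoid (G : SimpleGraph V) : Setoid (List V) where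
  r := WordEquiv G
  iseqv := ⟨fun _ => Relation.ReflTransGen.refl,
    fun h => by
      induction h with
      | refl => exact Relation.ReflTransGen.refl
      | tail _ hs ih => exact Relation.ReflTransGen.head (adjSwap_symm G hs) ih,
    fun h h' => Relation.ReflTransGen.trans h h'⟩

/-- A word is `G`-reduced if between any two equal letters there is a letter distinct from
them and not adjacent to them. -/
def IsGReduced (G : SimpleGraph V) (w : List V) : Prop :=
  ∀ i j : Fin w.length, i < j → w.get i = w.get j →
    ∃ k : Fin w.length, i < k ∧ k < j ∧ w.get k ≠ w.get i ∧ ¬ G.Adj (w.get k) (w.get i)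

/-- The product `x_{w_1} ⋯ x_{w_ℓ}` depends only on the equivalence class of a word. -/
noncomputable def classProd (G : SimpleGraph V) (x : V → ℝ≥0∞) :
    Quotient (wordSetoid G) → ℝ≥0∞ :=
  Quotient.lift (fun w : List V => (w.map x).prod) (by
    intro a b h
    induction h with
    | refl => rfl
    | tail _ hs ih =>
        obtain ⟨a', b', u, v, huv, rfl, rfl⟩ := hs
        rw [ih]
        simp only [List.map_append, List.prod_append, List.map_cons, List.prod_cons]
        ring)

/-- `tildeF G x` : the sum over all equivalence classes of words of `∏ x_{w_i}`,
valued in `[0,∞]`. -/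
noncomputable def tildeF (G : SimpleGraph V) (x : V → ℝ) : ℝ≥0∞ :=
  ∑' c : Quotient (wordSetoid G), classProd G (fun v => ENNReal.ofReal (x v)) c

/-- `redF G x` : the sum over all equivalence classes of `G`-reduced words of `∏ x_{w_i}`,
valued in `[0,∞]`. -/
noncomputable def redF (G : SimpleGraph V) (x : V → ℝ) : ℝ≥0∞ :=
  ∑' c : {c : Quotient (wordSetoid G) // ∃ w, IsGReduced G w ∧ Quotient.mk (wordSetoid G) w = c},
    classProd G (fun v => ENNReal.ofReal (x v)) c.1

/-- The clique polynomial `𝕶_{G,V'}(x) = ∑_{cliques K ⊆ V'} (-1)^{|K|} ∏_{v ∈ K} x_v`. -/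
noncomputable def cliquePoly (G : SimpleGraph V) (V' : Finset V) (x : V → ℝ) : ℝ :=
  ∑ K ∈ V'.powerset.filter (fun K : Finset V => G.IsClique (K : Set V)),
    (-1 : ℝ) ^ K.card * ∏ v ∈ K, x v

/-- The Euclidean norm on `ℝ^V`. -/
noncomputable def eucNorm (x : V → ℝ) : ℝ := Real.sqrt (∑ v, x v ^ 2)

/-- `min_{V' ⊆ V} 𝕶_{G,V'}(x)`. -/
noncomputable def minK (G : SimpleGraph V) (x : V → ℝ) : ℝ :=
  Finset.univ.inf' ⟨∅, Finset.mem_univ _⟩ fun V' : Finset V => cliquePoly G V' x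

/-- `ρ(u) = inf {r ∈ [0,∞) : min_{V' ⊆ V} 𝕶_{G,V'}(r·u) = 0}`. -/
noncomputable def rho (G : SimpleGraph V) (u : V → ℝ) : ℝ :=
  sInf {r : ℝ | 0 ≤ r ∧ minK G (r • u) = 0}

/-- The region `R(G) = {x ∈ [0,1]^V : 𝕶_{G,V'}(x) > 0 for all V' ⊆ V}`. -/
def regionR (G : SimpleGraph V) : Set (V → ℝ) :=
  {x | (∀ v, x v ∈ Set.Icc (0 : ℝ) 1) ∧ ∀ V' : Finset V, 0 < cliquePoly G V' x}


set_option maxHeartbeats 1000000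

section CP
variable (G : SimpleGraph V)

lemma cliquePoly_congr (V' : Finset V) {x y : V → ℝ} (h : ∀ v ∈ V', x v = y v) :
    cliquePoly G V' x = cliquePoly G V' y := by
  unfold cliquePoly
  refine Finset.sum_congr rfl fun K hK => ?_
  simp only [Finset.mem_filter, Finset.mem_powerset] at hK
  rw [Finset.prod_congr rfl fun v hv => h v (hK.1 hv)]

lemma cliquePoly_empty (x : V → ℝ) : cliquePoly G ∅ x = 1 := by
  unfold cliquePoly
  rw [Finset.powerset_empty, Finset.filter_singleton]
  simp

lemma cliquePoly_zero (V' : Finset V) : cliquePoly G V' (0 : V → ℝ) = 1 := by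
  unfold cliquePoly
  rw [Finset.sum_eq_single (∅ : Finset V)]
  · simp
  · intro K hK hne
    rw [Finset.prod_eq_zero_iff.2 ?_, mul_zero]
    obtain ⟨v, hv⟩ := Finset.nonempty_iff_ne_empty.2 hne
    exact ⟨v, hv, rfl⟩
  · intro h
    exact absurd (by simp [SimpleGraph.isClique_empty] : (∅ : Finset V) ∈ _) h

lemma cliquePoly_singleton (v : V) (x : V → ℝ) : cliquePoly G {v} x = 1 - x v := by
  unfold cliquePoly
  have hps : ({v} : Finset V).powerset = {∅, {v}} := by
    ext K
    simp [Finset.subset_singleton_iff]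
  rw [hps]
  rw [Finset.filter_true_of_mem (by
    intro K hK
    simp only [Finset.mem_insert, Finset.mem_singleton] at hK
    rcases hK with rfl | rfl
    · simp [SimpleGraph.isClique_empty]
    · simp)]
  rw [Finset.sum_insert (by
    simp only [Finset.mem_singleton]
    exact fun h => (Finset.singleton_ne_empty v) h.symm)]
  simp [sub_eq_add_neg]

lemma cliquePoly_recursion (V' : Finset V) (x : V → ℝ) {v : V} (hv : v ∈ V') :
    cliquePoly G V' x =
      cliquePoly G (V'.erase v) x - x v * cliquePoly G (V'.filter (G.Adj v)) x := by
  classical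
  unfold cliquePoly
  rw [← Finset.sum_filter_add_sum_filter_not
    (V'.powerset.filter fun K : Finset V => G.IsClique (K : Set V)) (fun K => v ∈ K)]
  have h1 : ((V'.powerset.filter fun K : Finset V => G.IsClique (K : Set V)).filter
      fun K => v ∉ K) = (V'.erase v).powerset.filter
        (fun K : Finset V => G.IsClique (K : Set V)) := by
    ext K
    simp only [Finset.mem_filter, Finset.mem_powerset, Finset.subset_erase]
    tauto
  have h2 : ((V'.powerset.filter fun K : Finset V => G.IsClique (K : Set V)).filter
      fun K => v ∈ K).sum (fun K => (-1 : ℝ) ^ K.card * ∏ w ∈ K, x w)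
      = - (x v * ∑ K ∈ (V'.filter (G.Adj v)).powerset.filter
          (fun K : Finset V => G.IsClique (K : Set V)),
          (-1 : ℝ) ^ K.card * ∏ w ∈ K, x w) := by
    rw [Finset.mul_sum, ← Finset.sum_neg_distrib]
    refine Finset.sum_nbij' (fun K => K.erase v) (fun K => insert v K) ?_ ?_ ?_ ?_ ?_
    · intro K hK
      simp only [Finset.mem_filter, Finset.mem_powerset] at hK ⊢
      obtain ⟨⟨hKV, hcl⟩, hvK⟩ := hK
      refine ⟨?_, hcl.subset (by simp [Finset.erase_subset])⟩
      intro w hw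
      simp only [Finset.mem_erase] at hw
      simp only [Finset.mem_filter]
      exact ⟨hKV hw.2, hcl (Finset.mem_coe.2 hvK) (Finset.mem_coe.2 hw.2) (Ne.symm hw.1)⟩
    · intro K hK
      simp only [Finset.mem_filter, Finset.mem_powerset] at hK ⊢
      obtain ⟨hKV, hcl⟩ := hK
      have hvK : v ∉ K := by
        intro hvK
        exact G.irrefl (Finset.mem_filter.1 (hKV hvK)).2
      refine ⟨⟨?_, ?_⟩, Finset.mem_insert_self v K⟩
      · intro w hw
        rcases Finset.mem_insert.1 hw with rfl | hw
        · exact hv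
        · exact Finset.filter_subset _ _ (hKV hw)
      · rw [Finset.coe_insert]
        refine hcl.insert ?_
        intro w hw _
        exact (Finset.mem_filter.1 (hKV hw)).2
    · intro K hK
      simp only [Finset.mem_filter] at hK
      exact Finset.insert_erase hK.2
    · intro K hK
      simp only [Finset.mem_filter, Finset.mem_powerset] at hK
      have hvK : v ∉ K := by
        intro hvK
        exact G.irrefl (Finset.mem_filter.1 (hK.1 hvK)).2
      exact Finset.erase_insert hvK
    · intro K hK
      simp only [Finset.mem_filter, Finset.mem_powerset] at hK
      obtain ⟨⟨hKV, hcl⟩, hvK⟩ := hK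
      have hcard : (K.erase v).card + 1 = K.card := Finset.card_erase_add_one hvK
      have hprod : x v * ∏ w ∈ K.erase v, x w = ∏ w ∈ K, x w :=
        Finset.mul_prod_erase K x hvK
      rw [← hcard, ← hprod, pow_succ]
      ring
  rw [h1, h2]
  ring



lemma continuous_cliquePoly (V' : Finset V) : Continuous (cliquePoly G V') := by
  unfold cliquePoly
  refine continuous_finset_sum _ fun K _ => Continuous.mul continuous_const ?_
  exact continuous_finset_prod _ fun v _ => continuous_apply v

lemma continuous_minK : Continuous (minK G) :=
  Continuous.finset_inf'_apply _ fun V' _ => continuous_cliquePoly G V'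

lemma minK_le (V' : Finset V) (x : V → ℝ) : minK G x ≤ cliquePoly G V' x :=
  Finset.inf'_le _ (Finset.mem_univ _)

lemma minK_pos_iff (x : V → ℝ) :
    0 < minK G x ↔ ∀ V' : Finset V, 0 < cliquePoly G V' x := by
  unfold minK
  show 0 < Finset.univ.inf' Finset.univ_nonempty _ ↔ _
  rw [Finset.lt_inf'_iff]
  exact ⟨fun h V' => h V' (Finset.mem_univ _), fun h V' _ => h V'⟩

lemma minK_zero : minK G (0 : V → ℝ) = 1 := by
  unfold minK
  have : (Finset.univ.inf' ⟨∅, Finset.mem_univ _⟩ fun V' : Finset V => cliquePoly G V' 0)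
      = Finset.univ.inf' ⟨∅, Finset.mem_univ _⟩ fun _ : Finset V => (1 : ℝ) := by
    refine Finset.inf'_congr _ rfl fun V' _ => cliquePoly_zero G V'
  rw [this]
  show Finset.univ.inf' Finset.univ_nonempty (fun _ : Finset V => (1 : ℝ)) = 1
  rw [Finset.inf'_const]


lemma cliquePoly_update_pos {x : V → ℝ} (hx : ∀ W : Finset V, 0 < cliquePoly G W x)
    {v : V} {c : ℝ} (hc0 : 0 ≤ c) (hcx : c ≤ x v) (W : Finset V) :
    0 < cliquePoly G W (Function.update x v c) := by
  by_cases hv : v ∈ W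
  · have e1 : cliquePoly G (W.erase v) (Function.update x v c)
        = cliquePoly G (W.erase v) x :=
      cliquePoly_congr G _ fun w hw =>
        Function.update_of_ne (Finset.mem_erase.1 hw).1 _ _
    have e2 : cliquePoly G (W.filter (G.Adj v)) (Function.update x v c)
        = cliquePoly G (W.filter (G.Adj v)) x :=
      cliquePoly_congr G _ fun w hw =>
        Function.update_of_ne (fun h => G.irrefl (h ▸ (Finset.mem_filter.1 hw).2)) _ _
    rw [cliquePoly_recursion G W _ hv, e1, e2, Function.update_self]
    have h1 := hx W
    rw [cliquePoly_recursion G W x hv] at h1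
    have h2 := hx (W.filter (G.Adj v))
    nlinarith [mul_le_mul_of_nonneg_right hcx h2.le]
  · rw [cliquePoly_congr G W (y := x)
      (fun w hw => Function.update_of_ne (fun h => hv (by rw [← h]; exact hw)) _ _)]
    exact hx W

lemma cliquePoly_downward {x y : V → ℝ} (hx : ∀ W : Finset V, 0 < cliquePoly G W x)
    (hy0 : ∀ v, 0 ≤ y v) (hyx : ∀ v, y v ≤ x v) :
    ∀ W : Finset V, 0 < cliquePoly G W y := by
  have key : ∀ s : Finset V, ∀ W : Finset V,
      0 < cliquePoly G W (fun v => if v ∈ s then y v else x v) := by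
    intro s
    induction s using Finset.induction_on with
    | empty => simpa using hx
    | @insert a s ha ih =>
      have hupd : (fun v => if v ∈ insert a s then y v else x v)
          = Function.update (fun v => if v ∈ s then y v else x v) a (y a) := by
        funext w
        by_cases hw : w = a
        · subst hw; simp [ha]
        · simp [Function.update_of_ne hw, Finset.mem_insert, hw]
      rw [hupd]
      refine cliquePoly_update_pos G ih (hy0 a) ?_
      simp only [ha, if_false]
      exact hyx a
  intro W
  simpa using key Finset.univ W

lemma eucNorm_nonneg (x : V → ℝ) : 0 ≤ eucNorm x := Real.sqrt_nonneg _

lemma eucNorm_eq_zero {x : V → ℝ} : eucNorm x = 0 ↔ x = 0 := by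
  unfold eucNorm
  rw [Real.sqrt_eq_zero (Finset.sum_nonneg fun v _ => sq_nonneg _)]
  rw [Finset.sum_eq_zero_iff_of_nonneg fun v _ => sq_nonneg _]
  constructor
  · intro h
    funext v
    exact pow_eq_zero_iff (by norm_num) |>.1 (h v (Finset.mem_univ v))
  · rintro rfl
    simp

lemma eucNorm_pos {x : V → ℝ} (h : x ≠ 0) : 0 < eucNorm x :=
  lt_of_le_of_ne (eucNorm_nonneg x) fun h' => h (eucNorm_eq_zero.1 h'.symm)

lemma abs_le_eucNorm (x : V → ℝ) (v : V) : |x v| ≤ eucNorm x := by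
  have h : x v ^ 2 ≤ ∑ w, x w ^ 2 :=
    Finset.single_le_sum (fun w _ => sq_nonneg (x w)) (Finset.mem_univ v)
  calc |x v| = Real.sqrt (x v ^ 2) := (Real.sqrt_sq_eq_abs _).symm
  _ ≤ eucNorm x := Real.sqrt_le_sqrt h

lemma eucNorm_smul (c : ℝ) (x : V → ℝ) : eucNorm (c • x) = |c| * eucNorm x := by
  unfold eucNorm
  have h : ∑ v, (c • x) v ^ 2 = c ^ 2 * ∑ v, x v ^ 2 := by
    rw [Finset.mul_sum]
    refine Finset.sum_congr rfl fun v _ => ?_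
    simp [mul_pow]
  rw [h, Real.sqrt_mul (sq_nonneg c), Real.sqrt_sq_eq_abs]

lemma continuous_eucNorm : Continuous (eucNorm (V := V)) :=
  Real.continuous_sqrt.comp (continuous_finset_sum _ fun v _ => (continuous_apply v).pow 2)


lemma minK_nonpos_mono {x x' : V → ℝ} (hx0 : ∀ v, 0 ≤ x v) (hxx' : ∀ v, x v ≤ x' v)
    (h : minK G x ≤ 0) : minK G x' ≤ 0 := by
  by_contra h'
  push_neg at h'
  have hall := (minK_pos_iff G x').1 h'
  have := (minK_pos_iff G x).2 (cliquePoly_downward G hall hx0 hxx')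
  linarith

section Rho
variable {G : SimpleGraph V} {u : V → ℝ} (hu0 : ∀ v, 0 ≤ u v) (hu1 : eucNorm u = 1)

lemma continuous_minK_ray : Continuous fun r : ℝ => minK G (r • u) :=
  (continuous_minK G).comp (continuous_id.smul continuous_const)

include hu1 in
lemma sum_sq_eq_one : ∑ v, u v ^ 2 = 1 := by
  have h0 : 0 ≤ ∑ v, u v ^ 2 := Finset.sum_nonneg fun v _ => sq_nonneg _
  have := Real.sq_sqrt h0
  rw [show Real.sqrt (∑ v, u v ^ 2) = eucNorm u from rfl, hu1] at this
  linarith [this]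

include hu0 hu1 in
lemma rhoSet_nonempty : {r : ℝ | 0 ≤ r ∧ minK G (r • u) = 0}.Nonempty := by
  obtain ⟨v, hv⟩ : ∃ v, 0 < u v := by
    obtain ⟨v, hv⟩ : ∃ v, u v ≠ 0 := by
      by_contra h
      push_neg at h
      have : u = 0 := funext h
      rw [this] at hu1
      rw [eucNorm_eq_zero.2 rfl] at hu1
      norm_num at hu1
    exact ⟨v, lt_of_le_of_ne (hu0 v) (Ne.symm hv)⟩
  set R := 2 / u v with hR
  have hR0 : (0 : ℝ) ≤ R := le_of_lt (div_pos two_pos hv)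
  have hgR : minK G (R • u) ≤ -1 := by
    have h1 : minK G (R • u) ≤ cliquePoly G {v} (R • u) := minK_le G _ _
    rw [cliquePoly_singleton G v (R • u)] at h1
    have : R * u v = 2 := div_mul_cancel₀ 2 (ne_of_gt hv)
    simp only [Pi.smul_apply, smul_eq_mul] at h1
    rw [this] at h1
    linarith
  have hg0 : minK G ((0 : ℝ) • u) = 1 := by rw [zero_smul]; exact minK_zero G
  have := intermediate_value_Icc' hR0 (continuous_minK_ray (G := G) (u := u)).continuousOn
  have h0mem : (0 : ℝ) ∈ Set.Icc (minK G (R • u)) (minK G ((0:ℝ) • u)) := by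
    constructor <;> [linarith; linarith]
  obtain ⟨r, hr, hr0⟩ := this h0mem
  exact ⟨r, hr.1, hr0⟩

include hu0 hu1 in
lemma rho_spec : 0 ≤ rho G u ∧ minK G (rho G u • u) = 0 := by
  have hclosed : IsClosed {r : ℝ | 0 ≤ r ∧ minK G (r • u) = 0} := by
    have : {r : ℝ | 0 ≤ r ∧ minK G (r • u) = 0}
        = Set.Ici 0 ∩ (fun r : ℝ => minK G (r • u)) ⁻¹' {0} := by
      ext r
      simp only [Set.mem_setOf_eq, Set.mem_inter_iff, Set.mem_Ici, Set.mem_preimage,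
        Set.mem_singleton_iff]
    rw [this]
    exact isClosed_Ici.inter (isClosed_singleton.preimage continuous_minK_ray)
  exact hclosed.csInf_mem (rhoSet_nonempty hu0 hu1) ⟨0, fun r hr => hr.1⟩

include hu0 hu1 in
lemma minK_pos_of_lt_rho {r : ℝ} (hr0 : 0 ≤ r) (hr : r < rho G u) :
    0 < minK G (r • u) := by
  by_contra h
  push_neg at h
  have hg0 : minK G ((0 : ℝ) • u) = 1 := by rw [zero_smul]; exact minK_zero G
  have := intermediate_value_Icc' hr0 (continuous_minK_ray (G := G) (u := u)).continuousOn
  have h0mem : (0 : ℝ) ∈ Set.Icc (minK G (r • u)) (minK G ((0:ℝ) • u)) := by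
    constructor <;> [linarith; linarith]
  obtain ⟨r', hr', hr'0⟩ := this h0mem
  have : rho G u ≤ r' := csInf_le ⟨0, fun s hs => hs.1⟩ ⟨hr'.1, hr'0⟩
  linarith [hr'.2]

include hu0 hu1 in
lemma rho_le_of_minK_nonpos {r : ℝ} (hr0 : 0 ≤ r) (h : minK G (r • u) ≤ 0) :
    rho G u ≤ r := by
  by_contra h'
  push_neg at h'
  linarith [minK_pos_of_lt_rho hu0 hu1 hr0 h']

include hu0 hu1 in
lemma rho_pos : 0 < rho G u := by
  obtain ⟨h0, hmin⟩ := rho_spec hu0 hu1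
  rcases lt_or_eq_of_le h0 with h | h
  · exact h
  · exfalso
    rw [← h, zero_smul, minK_zero G] at hmin
    norm_num at hmin

lemma cliquePoly_ge_one_sub (G : SimpleGraph V) {x : V → ℝ} {r : ℝ} (hr0 : 0 ≤ r) (hr1 : r ≤ 1)
    (hx : ∀ v, 0 ≤ x v ∧ x v ≤ r) (W : Finset V) :
    1 - (2:ℝ)^(Fintype.card V) * r ≤ cliquePoly G W x := by
  classical
  set s := W.powerset.filter (fun K : Finset V => G.IsClique (K : Set V)) with hs
  have hmem : (∅ : Finset V) ∈ s := by
    simp only [hs, Finset.mem_filter, Finset.mem_powerset]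
    exact ⟨Finset.empty_subset _, by simp⟩
  have hsum : cliquePoly G W x = 1 + ∑ K ∈ s.erase ∅, (-1:ℝ)^K.card * ∏ v ∈ K, x v := by
    unfold cliquePoly
    rw [← Finset.add_sum_erase s _ hmem]
    norm_num
  have hterm : ∀ K ∈ s.erase ∅, -r ≤ (-1:ℝ)^K.card * ∏ v ∈ K, x v := by
    intro K hK
    have hKne : K ≠ ∅ := (Finset.mem_erase.1 hK).1
    have hcard : 1 ≤ K.card := Finset.card_pos.2 (Finset.nonempty_iff_ne_empty.2 hKne)
    have hp0 : 0 ≤ ∏ v ∈ K, x v := Finset.prod_nonneg fun v _ => (hx v).1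
    have hpr : ∏ v ∈ K, x v ≤ r := by
      calc ∏ v ∈ K, x v ≤ ∏ _v ∈ K, r :=
            Finset.prod_le_prod (fun v _ => (hx v).1) (fun v _ => (hx v).2)
      _ = r ^ K.card := Finset.prod_const r
      _ ≤ r ^ 1 := pow_le_pow_of_le_one hr0 hr1 hcard
      _ = r := pow_one r
    rcases neg_one_pow_eq_or ℝ K.card with h | h <;> rw [h] <;> nlinarith
  have hcardle : (((s.erase ∅).card : ℝ)) ≤ (2:ℝ)^(Fintype.card V) := by
    have h1 : (s.erase ∅).card ≤ s.card := Finset.card_le_card (Finset.erase_subset _ _)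
    have h2 : s.card ≤ W.powerset.card := Finset.card_le_card (Finset.filter_subset _ _)
    have h4 : W.card ≤ Fintype.card V := W.card_le_univ
    have h5 : (s.erase ∅).card ≤ 2 ^ Fintype.card V := by
      calc (s.erase ∅).card ≤ s.card := h1
      _ ≤ 2 ^ W.card := by rw [← Finset.card_powerset]; exact h2
      _ ≤ 2 ^ Fintype.card V := Nat.pow_le_pow_right (by norm_num) h4
    calc (((s.erase ∅).card : ℝ)) ≤ ((2 ^ Fintype.card V : ℕ) : ℝ) := Nat.cast_le.2 h5
    _ = (2:ℝ)^(Fintype.card V) := by push_cast; ring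
  have hsumlow : -((((s.erase ∅).card : ℝ)) * r)
      ≤ ∑ K ∈ s.erase ∅, (-1:ℝ)^K.card * ∏ v ∈ K, x v := by
    have h := Finset.card_nsmul_le_sum (s.erase ∅)
      (fun K => (-1:ℝ)^K.card * ∏ v ∈ K, x v) (-r) hterm
    rw [nsmul_eq_mul] at h
    calc -((((s.erase ∅).card : ℝ)) * r) = ((s.erase ∅).card : ℝ) * (-r) := by ring
    _ ≤ _ := h
  rw [hsum]
  have hmul : (((s.erase ∅).card : ℝ)) * r ≤ (2:ℝ)^(Fintype.card V) * r :=
    mul_le_mul_of_nonneg_right hcardle hr0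
  linarith

include hu0 hu1 in
lemma rho_le_sqrt_card : rho G u ≤ Real.sqrt (Fintype.card V) := by
  have hsum := sum_sq_eq_one hu1
  set c := ((Fintype.card V : ℕ) : ℝ) with hc
  set C := Real.sqrt c with hC
  have hex : ∃ v, 1 ≤ C * u v := by
    by_contra h
    push_neg at h
    have hne : (Finset.univ : Finset V).Nonempty := by
      by_contra h'
      rw [Finset.not_nonempty_iff_eq_empty] at h'
      rw [h'] at hsum
      simp at hsum
    have hc0 : (0:ℝ) < c := by
      have hcp : 0 < Fintype.card V := Fintype.card_pos_iff.2 ⟨hne.choose⟩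
      rw [hc]
      exact_mod_cast hcp
    have hC0 : 0 < C := Real.sqrt_pos.2 hc0
    have hCs : C ^ 2 = c := Real.sq_sqrt hc0.le
    have hlt : ∀ v ∈ Finset.univ, u v ^ 2 < 1 / c := by
      intro v _
      have h1 : C * u v < 1 := h v
      have h2 : 0 ≤ C * u v := mul_nonneg hC0.le (hu0 v)
      rw [lt_div_iff₀ hc0]
      nlinarith
    have hlt2 := Finset.sum_lt_sum_of_nonempty hne hlt
    rw [hsum, Finset.sum_const, Finset.card_univ, nsmul_eq_mul] at hlt2
    rw [mul_one_div, div_self (ne_of_gt hc0)] at hlt2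
    linarith
  obtain ⟨v, hv⟩ := hex
  have hC0 : 0 ≤ C := Real.sqrt_nonneg _
  have hnp : minK G (C • u) ≤ 0 := by
    have h1 := minK_le G {v} (C • u)
    rw [cliquePoly_singleton] at h1
    simp only [Pi.smul_apply, smul_eq_mul] at h1
    linarith
  exact rho_le_of_minK_nonpos hu0 hu1 hC0 hnp

include hu0 hu1 in
lemma rho_lower_bound : 1 / (2 * 2 ^ (Fintype.card V)) ≤ rho G u := by
  set N := (2:ℝ) ^ (Fintype.card V) with hN
  have hN1 : (1:ℝ) ≤ N := one_le_pow₀ (by norm_num)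
  refine le_csInf (rhoSet_nonempty hu0 hu1) ?_
  rintro r ⟨hr0, hrz⟩
  by_contra h
  push_neg at h
  have hr1 : r ≤ 1 := by
    have h2N : (1:ℝ)/(2*N) ≤ 1 := by
      rw [div_le_one (by linarith)]
      linarith
    linarith
  have hx : ∀ v, 0 ≤ (r • u) v ∧ (r • u) v ≤ r := by
    intro v
    have h1 := abs_le_eucNorm u v
    rw [hu1] at h1
    have h2 : u v ≤ 1 := le_trans (le_abs_self _) h1
    refine ⟨mul_nonneg hr0 (hu0 v), ?_⟩
    simp only [Pi.smul_apply, smul_eq_mul]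
    nlinarith
  have hW := cliquePoly_ge_one_sub G hr0 hr1 hx
  have hpos : 0 < minK G (r • u) := by
    refine (minK_pos_iff G _).2 fun W => lt_of_lt_of_le ?_ (hW W)
    have hlt : N * r < 1/2 := by
      have h2 := (lt_div_iff₀ (by linarith : (0:ℝ) < 2 * N)).1 h
      nlinarith
    linarith
  rw [hrz] at hpos
  linarith

include hu0 hu1 in
lemma exists_pos_coord : ∃ v, 0 < u v := by
  obtain ⟨v, hv⟩ : ∃ v, u v ≠ 0 := by
    by_contra h
    push_neg at h
    have hz : u = 0 := funext h
    rw [hz, eucNorm_eq_zero.2 rfl] at hu1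
    norm_num at hu1
  exact ⟨v, lt_of_le_of_ne (hu0 v) (Ne.symm hv)⟩

include hu0 hu1 in
lemma rho_usc {ε : ℝ} (hε : 0 < ε) :
    ∃ δ > 0, ∀ u' : V → ℝ, (∀ v, 0 ≤ u' v) → eucNorm u' = 1 → dist u' u < δ →
      rho G u' ≤ rho G u + ε := by
  set ρ := rho G u with hρdef
  obtain ⟨hρ0, hρz⟩ := rho_spec hu0 hu1
  set P := Finset.univ.filter (fun v => 0 < u v) with hP
  have hPne : P.Nonempty := by
    obtain ⟨v, hv⟩ := exists_pos_coord hu0 hu1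
    exact ⟨v, by simp [hP, hv]⟩
  set m := P.inf' hPne u with hm
  have hm0 : 0 < m := by
    rw [hm]
    rw [Finset.lt_inf'_iff]
    intro v hv
    exact (Finset.mem_filter.1 hv).2
  have hr0 : (0:ℝ) < ρ + ε := by linarith
  set δ := ε * m / (ρ + ε) with hδ
  have hδ0 : 0 < δ := by positivity
  refine ⟨δ, hδ0, ?_⟩
  intro u' hu'0 hu'1 hdist
  have hδr : δ * (ρ + ε) = ε * m := div_mul_cancel₀ _ (ne_of_gt hr0)
  have hcomp : ∀ v, ρ * u v ≤ (ρ + ε) * u' v := by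
    intro v
    rcases le_or_gt (u v) 0 with h | h
    · have huv : u v = 0 := le_antisymm h (hu0 v)
      rw [huv, mul_zero]
      exact mul_nonneg hr0.le (hu'0 v)
    · have hvP : v ∈ P := by simp [hP, h]
      have hmv : m ≤ u v := Finset.inf'_le _ hvP
      have hd : |u' v - u v| < δ := by
        calc |u' v - u v| = dist (u' v) (u v) := (Real.dist_eq _ _).symm
        _ ≤ dist u' u := dist_le_pi_dist u' u v
        _ < δ := hdist
      have hlow : u v - δ < u' v := by
        have := abs_lt.1 hd
        linarith [this.1]
      nlinarith
  have hnp : minK G ((ρ + ε) • u') ≤ 0 := by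
    refine minK_nonpos_mono G (x := ρ • u) ?_ ?_ (le_of_eq hρz)
    · intro v
      exact mul_nonneg hρ0 (hu0 v)
    · intro v
      exact hcomp v
  exact rho_le_of_minK_nonpos hu'0 hu'1 hr0.le hnp

include hu0 hu1 in
lemma rho_lsc {ε : ℝ} (hε : 0 < ε) :
    ∃ δ > 0, ∀ u' : V → ℝ, (∀ v, 0 ≤ u' v) → eucNorm u' = 1 → dist u' u < δ →
      rho G u - ε ≤ rho G u' := by
  set ρ := rho G u with hρdef
  have hρ0 : 0 < ρ := rho_pos hu0 hu1
  set r := ρ - min (ε/2) (ρ/2) with hr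
  have hrρ : r < ρ := by
    have : 0 < min (ε/2) (ρ/2) := lt_min (by linarith) (by linarith)
    rw [hr]; linarith
  have hr0 : 0 ≤ r := by
    have : min (ε/2) (ρ/2) ≤ ρ/2 := min_le_right _ _
    rw [hr]; linarith
  have hrε : ρ - ε < r := by
    have : min (ε/2) (ρ/2) ≤ ε/2 := min_le_left _ _
    rw [hr]; linarith
  have hpos : 0 < minK G (r • u) := minK_pos_of_lt_rho hu0 hu1 hr0 hrρ
  have hcont : ContinuousAt (fun w : V → ℝ => minK G (r • w)) u :=
    ((continuous_minK G).comp ((continuous_const (y := r)).smul (continuous_id (X := V → ℝ)))).continuousAt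
  rw [Metric.continuousAt_iff] at hcont
  obtain ⟨δ, hδ0, hδ⟩ := hcont (minK G (r • u)) hpos
  refine ⟨δ, hδ0, ?_⟩
  intro u' hu'0 hu'1 hdist
  have hpos' : 0 < minK G (r • u') := by
    have := hδ hdist
    rw [Real.dist_eq] at this
    have := abs_lt.1 this
    linarith [this.1]
  have : r ≤ rho G u' := by
    refine le_csInf (rhoSet_nonempty hu'0 hu'1) ?_
    rintro s ⟨hs0, hsz⟩
    by_contra h
    push_neg at h
    have hnp : minK G (r • u') ≤ 0 := by
      refine minK_nonpos_mono G (x := s • u') ?_ ?_ (le_of_eq hsz)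
      · intro v; exact mul_nonneg hs0 (hu'0 v)
      · intro v
        simp only [Pi.smul_apply, smul_eq_mul]
        exact mul_le_mul_of_nonneg_right h.le (hu'0 v)
    linarith
  linarith

end Rho

lemma rho_continuousOn (G : SimpleGraph V) :
    ContinuousOn (rho G) {u : V → ℝ | (∀ v, 0 ≤ u v) ∧ eucNorm u = 1} := by
  rw [Metric.continuousOn_iff]
  rintro u ⟨hu0, hu1⟩ ε hε
  obtain ⟨δ1, hδ1, h1⟩ := rho_usc (G := G) hu0 hu1 (half_pos hε)
  obtain ⟨δ2, hδ2, h2⟩ := rho_lsc (G := G) hu0 hu1 (half_pos hε)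
  refine ⟨min δ1 δ2, lt_min hδ1 hδ2, ?_⟩
  rintro u' ⟨hu'0, hu'1⟩ hdist
  have ha := h1 u' hu'0 hu'1 (lt_of_lt_of_le hdist (min_le_left _ _))
  have hb := h2 u' hu'0 hu'1 (lt_of_lt_of_le hdist (min_le_right _ _))
  rw [Real.dist_eq, abs_lt]
  constructor <;> linarith

end CP

section Assembly

variable (G : SimpleGraph V)

noncomputable def PhiFun (y : V → ℝ) : V → ℝ := rho G ((eucNorm y)⁻¹ • y) • y

noncomputable def PsiFun (x : V → ℝ) : V → ℝ := (rho G ((eucNorm x)⁻¹ • x))⁻¹ • x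

lemma unit_of_ne {y : V → ℝ} (hy0 : ∀ v, 0 ≤ y v) (hy : y ≠ 0) :
    (∀ v, 0 ≤ ((eucNorm y)⁻¹ • y) v) ∧ eucNorm ((eucNorm y)⁻¹ • y) = 1 := by
  have hn : 0 < eucNorm y := eucNorm_pos hy
  constructor
  · intro v
    exact mul_nonneg (inv_nonneg.2 hn.le) (hy0 v)
  · rw [eucNorm_smul, abs_of_nonneg (inv_nonneg.2 hn.le), inv_mul_cancel₀ (ne_of_gt hn)]

lemma normalize_smul {y : V → ℝ} (hy : y ≠ 0) {c : ℝ} (hc : 0 < c) :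
    (eucNorm (c • y))⁻¹ • (c • y) = (eucNorm y)⁻¹ • y := by
  have hn : 0 < eucNorm y := eucNorm_pos hy
  rw [eucNorm_smul, abs_of_pos hc, smul_smul, mul_inv,
    mul_comm (c⁻¹) ((eucNorm y)⁻¹), mul_assoc, inv_mul_cancel₀ (ne_of_gt hc), mul_one]

lemma smul_eucNorm_normalize {y : V → ℝ} (hy : y ≠ 0) :
    eucNorm y • ((eucNorm y)⁻¹ • y) = y := by
  rw [smul_smul, mul_inv_cancel₀ (ne_of_gt (eucNorm_pos hy)), one_smul]

lemma phiFun_zero : PhiFun G 0 = 0 := smul_zero _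

lemma psiFun_zero : PsiFun G 0 = 0 := smul_zero _

lemma zero_mem_regionR : (0 : V → ℝ) ∈ regionR G := by
  constructor
  · intro v
    exact ⟨le_refl _, by norm_num⟩
  · intro W
    rw [cliquePoly_zero]
    norm_num

lemma phi_mem {y : V → ℝ} (hy : y ∈ {y : V → ℝ | (∀ v, y v ∈ Set.Icc (0:ℝ) 1) ∧ eucNorm y < 1}) :
    PhiFun G y ∈ regionR G := by
  obtain ⟨hyc, hyn⟩ := hy
  by_cases hy0 : y = 0
  · rw [hy0, phiFun_zero]
    exact zero_mem_regionR G
  · have hy0' : ∀ v, 0 ≤ y v := fun v => (hyc v).1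
    set n := eucNorm y with hn
    have hnpos : 0 < n := eucNorm_pos hy0
    set u := (n⁻¹ : ℝ) • y with hu
    obtain ⟨hu0, hu1⟩ := unit_of_ne hy0' hy0
    have hρ : 0 < rho G u := rho_pos hu0 hu1
    set r := rho G u * n with hr
    have hr0 : 0 ≤ r := mul_nonneg hρ.le hnpos.le
    have hrlt : r < rho G u := by
      calc r = rho G u * n := hr
      _ < rho G u * 1 := by exact mul_lt_mul_of_pos_left hyn hρ
      _ = rho G u := mul_one _
    have hform : PhiFun G y = r • u := by
      rw [PhiFun, ← hn, ← hu, hr, mul_smul]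
      congr 1
      exact (smul_eucNorm_normalize hy0).symm
    have hmin : 0 < minK G (r • u) := minK_pos_of_lt_rho hu0 hu1 hr0 hrlt
    have hall := (minK_pos_iff G _).1 hmin
    rw [hform]
    constructor
    · intro v
      refine ⟨mul_nonneg hr0 (hu0 v), ?_⟩
      have hsing := hall {v}
      rw [cliquePoly_singleton] at hsing
      simp only [Pi.smul_apply, smul_eq_mul] at hsing ⊢
      linarith
    · exact hall

lemma norm_lt_rho_aux {u : V → ℝ} (hu0 : ∀ v, 0 ≤ u v) (hu1 : eucNorm u = 1)
    {n : ℝ} (hx : n • u ∈ regionR G) (h : rho G u ≤ n) : False := by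
  obtain ⟨hρ0, hρz⟩ := rho_spec hu0 hu1
  obtain ⟨W, _, hW⟩ := Finset.exists_mem_eq_inf' (⟨∅, Finset.mem_univ _⟩ :
    (Finset.univ : Finset (Finset V)).Nonempty) (fun W => cliquePoly G W (rho G u • u))
  have hWz : cliquePoly G W (rho G u • u) = 0 := by rw [← hW]; exact hρz
  have hpos := cliquePoly_downward G (y := rho G u • u) hx.2
    (fun v => mul_nonneg hρ0 (hu0 v))
    (fun v => by
      simp only [Pi.smul_apply, smul_eq_mul]
      exact mul_le_mul_of_nonneg_right h (hu0 v)) W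
  rw [hWz] at hpos
  exact lt_irrefl 0 hpos

lemma psi_mem {x : V → ℝ} (hx : x ∈ regionR G) :
    PsiFun G x ∈ {y : V → ℝ | (∀ v, y v ∈ Set.Icc (0:ℝ) 1) ∧ eucNorm y < 1} := by
  obtain ⟨hxc, hxp⟩ := hx
  by_cases hx0 : x = 0
  · rw [hx0, psiFun_zero]
    refine ⟨fun v => ⟨le_refl _, by norm_num⟩, ?_⟩
    rw [eucNorm_eq_zero.2 rfl]
    norm_num
  · have hx0' : ∀ v, 0 ≤ x v := fun v => (hxc v).1
    have hnpos : 0 < eucNorm x := eucNorm_pos hx0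
    obtain ⟨hu0, hu1⟩ := unit_of_ne hx0' hx0
    have hρ : 0 < rho G ((eucNorm x)⁻¹ • x) := rho_pos hu0 hu1
    have hnρ : eucNorm x < rho G ((eucNorm x)⁻¹ • x) := by
      by_contra h
      push_neg at h
      exact norm_lt_rho_aux G hu0 hu1
        (by rw [smul_eucNorm_normalize hx0]; exact ⟨hxc, hxp⟩) h
    have hval : eucNorm (PsiFun G x) = (rho G ((eucNorm x)⁻¹ • x))⁻¹ * eucNorm x := by
      rw [PsiFun, eucNorm_smul, abs_of_nonneg (inv_nonneg.2 hρ.le)]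
    have hlt1 : eucNorm (PsiFun G x) < 1 := by
      rw [hval, inv_mul_lt_iff₀ hρ, mul_one]
      exact hnρ
    refine ⟨?_, hlt1⟩
    intro v
    have h1 : 0 ≤ PsiFun G x v := by
      rw [PsiFun]
      exact mul_nonneg (inv_nonneg.2 hρ.le) (hx0' v)
    refine ⟨h1, ?_⟩
    have h2 := abs_le_eucNorm (PsiFun G x) v
    rw [abs_of_nonneg h1] at h2
    linarith

lemma phi_psi {x : V → ℝ} (hx : x ∈ regionR G) : PhiFun G (PsiFun G x) = x := by
  by_cases hx0 : x = 0
  · rw [hx0, psiFun_zero, phiFun_zero]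
  · have hx0' : ∀ v, 0 ≤ x v := fun v => (hx.1 v).1
    have hρ : 0 < rho G ((eucNorm x)⁻¹ • x) :=
      rho_pos (unit_of_ne hx0' hx0).1 (unit_of_ne hx0' hx0).2
    rw [PhiFun, PsiFun, normalize_smul hx0 (inv_pos.2 hρ), smul_smul,
      mul_inv_cancel₀ (ne_of_gt hρ), one_smul]

lemma psi_phi {y : V → ℝ}
    (hy : y ∈ {y : V → ℝ | (∀ v, y v ∈ Set.Icc (0:ℝ) 1) ∧ eucNorm y < 1}) :
    PsiFun G (PhiFun G y) = y := by
  by_cases hy0 : y = 0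
  · rw [hy0, phiFun_zero, psiFun_zero]
  · have hy0' : ∀ v, 0 ≤ y v := fun v => (hy.1 v).1
    have hρ : 0 < rho G ((eucNorm y)⁻¹ • y) :=
      rho_pos (unit_of_ne hy0' hy0).1 (unit_of_ne hy0' hy0).2
    rw [PsiFun, PhiFun, normalize_smul hy0 hρ, smul_smul,
      inv_mul_cancel₀ (ne_of_gt hρ), one_smul]

end Assembly

section Cont

variable (G : SimpleGraph V)

lemma continuousOn_rhoNormalized :
    ContinuousOn (fun y : V → ℝ => rho G ((eucNorm y)⁻¹ • y))
      {y : V → ℝ | (∀ v, 0 ≤ y v) ∧ y ≠ 0} := by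
  have hmap : Set.MapsTo (fun y : V → ℝ => (eucNorm y)⁻¹ • y)
      {y : V → ℝ | (∀ v, 0 ≤ y v) ∧ y ≠ 0} {u : V → ℝ | (∀ v, 0 ≤ u v) ∧ eucNorm u = 1} :=
    fun y hy => ⟨(unit_of_ne hy.1 hy.2).1, (unit_of_ne hy.1 hy.2).2⟩
  have hcont : ContinuousOn (fun y : V → ℝ => (eucNorm y)⁻¹ • y)
      {y : V → ℝ | (∀ v, 0 ≤ y v) ∧ y ≠ 0} :=
    ContinuousOn.smul ((continuous_eucNorm.continuousOn).inv₀
      fun y hy => ne_of_gt (eucNorm_pos hy.2)) continuousOn_id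
  exact (rho_continuousOn G).comp hcont hmap

lemma continuousOn_phiFun :
    ContinuousOn (PhiFun G) {y : V → ℝ | (∀ v, y v ∈ Set.Icc (0:ℝ) 1) ∧ eucNorm y < 1} := by
  intro y hy
  by_cases hy0 : y = 0
  · subst hy0
    rw [Metric.continuousWithinAt_iff]
    intro ε hε
    set C := Real.sqrt (Fintype.card V) with hC
    have hC0 : (0:ℝ) ≤ C := Real.sqrt_nonneg _
    refine ⟨ε / (C + 1), by positivity, ?_⟩
    intro y' hy' hdist
    rw [phiFun_zero]
    by_cases h0 : y' = 0
    · rw [h0, phiFun_zero]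
      simpa using hε
    · have h0' : ∀ v, 0 ≤ y' v := fun v => (hy'.1 v).1
      obtain ⟨hu0, hu1⟩ := unit_of_ne h0' h0
      have hb1 : rho G ((eucNorm y')⁻¹ • y') ≤ C := rho_le_sqrt_card hu0 hu1
      have hb0 : 0 ≤ rho G ((eucNorm y')⁻¹ • y') := (rho_spec hu0 hu1).1
      rw [PhiFun, dist_zero_right, norm_smul, Real.norm_eq_abs,
        abs_of_nonneg hb0]
      have hn' : ‖y'‖ < ε / (C + 1) := by
        rw [← dist_zero_right]
        exact hdist
      have hnn : (0:ℝ) ≤ ‖y'‖ := norm_nonneg _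
      have h1 : rho G ((eucNorm y')⁻¹ • y') * ‖y'‖ ≤ C * ‖y'‖ :=
        mul_le_mul_of_nonneg_right hb1 hnn
      have h2 : C * ‖y'‖ ≤ C * (ε / (C + 1)) := mul_le_mul_of_nonneg_left hn'.le hC0
      have h3 : C * (ε / (C + 1)) < ε := by
        rw [mul_div_assoc', div_lt_iff₀ (by linarith : (0:ℝ) < C + 1)]
        nlinarith
      linarith
  · have hy0' : ∀ v, 0 ≤ y v := fun v => (hy.1 v).1
    have hopen : ({0} : Set (V → ℝ))ᶜ ∈ nhds y :=
      isOpen_compl_singleton.mem_nhds (by simpa using hy0)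
    refine (continuousWithinAt_inter hopen).1 ?_
    have hsub : ({y' : V → ℝ | (∀ v, y' v ∈ Set.Icc (0:ℝ) 1) ∧ eucNorm y' < 1}
        ∩ ({0} : Set (V → ℝ))ᶜ) ⊆ {y' : V → ℝ | (∀ v, 0 ≤ y' v) ∧ y' ≠ 0} :=
      fun z hz => ⟨fun v => (hz.1.1 v).1, by simpa using hz.2⟩
    have hcwa : ContinuousWithinAt (fun y' : V → ℝ => rho G ((eucNorm y')⁻¹ • y'))
        ({y' : V → ℝ | (∀ v, y' v ∈ Set.Icc (0:ℝ) 1) ∧ eucNorm y' < 1}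
          ∩ ({0} : Set (V → ℝ))ᶜ) y :=
      ((continuousOn_rhoNormalized G) y ⟨hy0', hy0⟩).mono hsub
    exact hcwa.smul continuousWithinAt_id

lemma continuousOn_psiFun : ContinuousOn (PsiFun G) (regionR G) := by
  intro x hx
  by_cases hx0 : x = 0
  · subst hx0
    rw [Metric.continuousWithinAt_iff]
    intro ε hε
    set C := 2 * (2:ℝ) ^ (Fintype.card V) with hC
    have hC0 : (0:ℝ) < C := by positivity
    refine ⟨ε / C, by positivity, ?_⟩
    intro x' hx' hdist
    rw [psiFun_zero]
    by_cases h0 : x' = 0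
    · rw [h0, psiFun_zero]
      simpa using hε
    · have h0' : ∀ v, 0 ≤ x' v := fun v => (hx'.1 v).1
      obtain ⟨hu0, hu1⟩ := unit_of_ne h0' h0
      have hb1 : 1 / C ≤ rho G ((eucNorm x')⁻¹ • x') := rho_lower_bound hu0 hu1
      have hρ : 0 < rho G ((eucNorm x')⁻¹ • x') := rho_pos hu0 hu1
      have hbinv : (rho G ((eucNorm x')⁻¹ • x'))⁻¹ ≤ C := by
        rw [← one_div]
        rw [div_le_iff₀ hρ]
        rw [← div_le_iff₀' hC0]
        exact hb1
      rw [PsiFun, dist_zero_right, norm_smul, Real.norm_eq_abs,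
        abs_of_nonneg (inv_nonneg.2 hρ.le)]
      have hn' : ‖x'‖ < ε / C := by
        rw [← dist_zero_right]
        exact hdist
      have hnn : (0:ℝ) ≤ ‖x'‖ := norm_nonneg _
      calc (rho G ((eucNorm x')⁻¹ • x'))⁻¹ * ‖x'‖ ≤ C * ‖x'‖ :=
            mul_le_mul_of_nonneg_right hbinv hnn
      _ < C * (ε / C) := by
            exact mul_lt_mul_of_pos_left hn' hC0
      _ = ε := by field_simp
  · have hx0' : ∀ v, 0 ≤ x v := fun v => (hx.1 v).1
    have hopen : ({0} : Set (V → ℝ))ᶜ ∈ nhds x :=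
      isOpen_compl_singleton.mem_nhds (by simpa using hx0)
    refine (continuousWithinAt_inter hopen).1 ?_
    have hsub : (regionR G ∩ ({0} : Set (V → ℝ))ᶜ)
        ⊆ {y' : V → ℝ | (∀ v, 0 ≤ y' v) ∧ y' ≠ 0} :=
      fun z hz => ⟨fun v => (hz.1.1 v).1, by simpa using hz.2⟩
    have hcwa : ContinuousWithinAt (fun x' : V → ℝ => rho G ((eucNorm x')⁻¹ • x'))
        (regionR G ∩ ({0} : Set (V → ℝ))ᶜ) x :=
      ((continuousOn_rhoNormalized G) x ⟨hx0', hx0⟩).mono hsub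
    have hρ : 0 < rho G ((eucNorm x)⁻¹ • x) :=
      rho_pos (unit_of_ne hx0' hx0).1 (unit_of_ne hx0' hx0).2
    exact (hcwa.inv₀ (ne_of_gt hρ)).smul continuousWithinAt_id

noncomputable def regionHomeo :
    {y : V → ℝ | (∀ v, y v ∈ Set.Icc (0 : ℝ) 1) ∧ eucNorm y < 1} ≃ₜ regionR G where
  toFun y := ⟨PhiFun G y.1, phi_mem G y.2⟩
  invFun x := ⟨PsiFun G x.1, psi_mem G x.2⟩
  left_inv y := Subtype.ext (psi_phi G y.2)
  right_inv x := Subtype.ext (phi_psi G x.2)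
  continuous_toFun :=
    (continuousOn_iff_continuous_restrict.1 (continuousOn_phiFun G)).subtype_mk _
  continuous_invFun :=
    (continuousOn_iff_continuous_restrict.1 (continuousOn_psiFun G)).subtype_mk _

end Cont


/-- Lemma 4.3(4): `y ↦ ρ(y/‖y‖)·y` is a homeomorphism from
`{y ∈ [0,1]^V : ‖y‖ < 1}` onto `R(G)`. (Note that at `y = 0` the formula gives `0`.) -/
theorem regionR_homeomorph (G : SimpleGraph V) :
    ∃ e : {y : V → ℝ | (∀ v, y v ∈ Set.Icc (0 : ℝ) 1) ∧ eucNorm y < 1} ≃ₜ regionR G,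
      ∀ y : {y : V → ℝ | (∀ v, y v ∈ Set.Icc (0 : ℝ) 1) ∧ eucNorm y < 1},
        (e y : V → ℝ) = rho G ((eucNorm (y : V → ℝ))⁻¹ • (y : V → ℝ)) • (y : V → ℝ) := by
  exact ⟨regionHomeo G, fun _ => rfl⟩
end

section
/- For every vertex v ∈ V and every G-reduced word w, exactly one of the following holds: (i) the word vw obtained by prepending v to w is G-reduced; (ii) w is equivalent to a word whose first letter is v. -/
open scoped Classical ENNReal

set_option linter.unusedSectionVars false

variable {V : Type*} [Fintype V] [DecidableEq V]

/-! ### Auxiliary development for `reduced_prepend_dichotomy` -/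

/-- "Bad" witness: two equal letters with every letter in between equal or adjacent. -/
def Pbad (G : SimpleGraph V) (w : List V) : Prop :=
  ∃ i j : ℕ, i < j ∧ j < w.length ∧ w[i]? = w[j]? ∧
    ∀ k, i < k → k < j → ∀ x y : V, w[k]? = some x → w[i]? = some y →
      (x = y ∨ G.Adj x y)

lemma not_isGReduced_iff (G : SimpleGraph V) (w : List V) :
    ¬ IsGReduced G w ↔ Pbad G w := by
  constructor
  · intro h
    unfold IsGReduced at h
    push_neg at h
    obtain ⟨i, j, hij, heq, hmid⟩ := h
    refine ⟨i.1, j.1, hij, j.2, ?_, ?_⟩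
    · rw [List.getElem?_eq_getElem i.2, List.getElem?_eq_getElem j.2]
      simp only [← List.get_eq_getElem]
      rw [heq]
    · intro k hk1 hk2 x y hx hy
      have hk : k < w.length := lt_trans hk2 j.2
      rw [List.getElem?_eq_getElem hk] at hx
      rw [List.getElem?_eq_getElem i.2] at hy
      have hx' : x = w.get ⟨k, hk⟩ := by
        simpa [List.get_eq_getElem] using hx.symm
      have hy' : y = w.get i := by
        simpa [List.get_eq_getElem] using hy.symm
      subst hx'; subst hy'
      by_cases hxy : w.get ⟨k, hk⟩ = w.get i
      · exact Or.inl hxy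
      · exact Or.inr (hmid ⟨k, hk⟩ hk1 hk2 hxy)
  · rintro ⟨i, j, hij, hj, heq, hmid⟩ hred
    have hi : i < w.length := lt_trans hij hj
    obtain ⟨k, hk1, hk2, hkne, hknadj⟩ := hred ⟨i, hi⟩ ⟨j, hj⟩ hij (by
      have := heq
      rw [List.getElem?_eq_getElem hi, List.getElem?_eq_getElem hj] at this
      simpa [List.get_eq_getElem] using this)
    have hkx : w[k.1]? = some (w.get k) := by
      rw [List.getElem?_eq_getElem k.2]; simp [List.get_eq_getElem]
    have hiy : w[i]? = some (w.get ⟨i, hi⟩) := by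
      rw [List.getElem?_eq_getElem hi]; simp [List.get_eq_getElem]
    rcases hmid k.1 hk1 hk2 _ _ hkx hiy with h | h
    · exact hkne h
    · exact hknadj h

lemma wordEquiv_cons (G : SimpleGraph V) (y : V) {w w' : List V}
    (h : WordEquiv G w w') : WordEquiv G (y :: w) (y :: w') := by
  induction h with
  | refl => exact Relation.ReflTransGen.refl
  | tail _ hs ih =>
    obtain ⟨a, b, u, u', huv, rfl, rfl⟩ := hs
    exact ih.tail ⟨y :: a, b, u, u', huv, rfl, rfl⟩

lemma move_front (G : SimpleGraph V) (v : V) :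
    ∀ (m b : List V), (∀ y ∈ m, G.Adj y v) →
      ∃ t, WordEquiv G (m ++ v :: b) (v :: t) := by
  intro m
  induction m with
  | nil => exact fun b _ => ⟨b, Relation.ReflTransGen.refl⟩
  | cons y m ih =>
    intro b hyp
    obtain ⟨t, ht⟩ := ih b (fun z hz => hyp z (List.mem_cons_of_mem _ hz))
    have h1 : WordEquiv G (y :: (m ++ v :: b)) (y :: v :: t) := wordEquiv_cons G y ht
    have h2 : AdjSwap G (y :: v :: t) (v :: y :: t) :=
      ⟨[], t, y, v, hyp y List.mem_cons_self, rfl, rfl⟩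
    exact ⟨y :: t, h1.trans (Relation.ReflTransGen.single h2)⟩

/-- The index swap at positions `p`, `p+1`. -/
def swIdx (p k : ℕ) : ℕ := if k = p then p + 1 else if k = p + 1 then p else k

lemma swIdx_swIdx (p k : ℕ) : swIdx p (swIdx p k) = k := by
  unfold swIdx; split_ifs <;> omega

lemma getElem?_mid₀ (a b : List V) (u v : V) : (a ++ u :: v :: b)[a.length]? = some u := by
  rw [List.getElem?_append_right (le_refl _)]
  simp

lemma getElem?_mid₁ (a b : List V) (u v : V) :
    (a ++ u :: v :: b)[a.length + 1]? = some v := by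
  rw [List.getElem?_append_right (by omega : a.length ≤ a.length + 1)]
  simp

lemma getElem?_swap (a b : List V) (u v : V) (k : ℕ) :
    (a ++ v :: u :: b)[k]? = (a ++ u :: v :: b)[swIdx a.length k]? := by
  by_cases h1 : k = a.length
  · subst h1
    rw [show swIdx a.length a.length = a.length + 1 from if_pos rfl,
      getElem?_mid₀, getElem?_mid₁]
  by_cases h2 : k = a.length + 1
  · subst h2
    rw [show swIdx a.length (a.length + 1) = a.length from by unfold swIdx; split_ifs <;> omega,
      getElem?_mid₁, getElem?_mid₀]
  have h3 : swIdx a.length k = k := by unfold swIdx; split_ifs <;> omega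
  rw [h3]
  rcases lt_or_ge k a.length with h | h
  · rw [List.getElem?_append_left h, List.getElem?_append_left h]
  · have h4 : a.length ≤ k := h
    rw [List.getElem?_append_right h4, List.getElem?_append_right h4]
    obtain ⟨m, hm⟩ : ∃ m, k - a.length = m + 2 := ⟨k - a.length - 2, by omega⟩
    rw [hm, List.getElem?_cons_succ, List.getElem?_cons_succ,
      List.getElem?_cons_succ, List.getElem?_cons_succ]

lemma Pbad_swap (G : SimpleGraph V) {w w' : List V} (hs : AdjSwap G w w')
    (hp : Pbad G w') : Pbad G w := by
  obtain ⟨a, b, u, v, huv, rfl, rfl⟩ := hs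
  obtain ⟨i, j, hij, hj, heq, hmid⟩ := hp
  set p := a.length with hpdef
  have hlen : (a ++ v :: u :: b).length = p + 2 + b.length := by simp; omega
  have hlen2 : (a ++ u :: v :: b).length = p + 2 + b.length := by simp; omega
  have hc : ¬ (i = p ∧ j = p + 1) := by
    rintro ⟨rfl, rfl⟩
    rw [getElem?_mid₀, getElem?_mid₁] at heq
    exact huv.ne' (Option.some.inj heq)
  have hij' : swIdx p i < swIdx p j := by unfold swIdx; split_ifs <;> omega
  have hj' : swIdx p j < (a ++ u :: v :: b).length := by
    rw [hlen2]; rw [hlen] at hj; unfold swIdx; split_ifs <;> omega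
  refine ⟨swIdx p i, swIdx p j, hij', hj', ?_, ?_⟩
  · rw [← getElem?_swap, ← getElem?_swap]
    exact heq
  · intro k hk1 hk2 x y hx hy
    have hx' : (a ++ v :: u :: b)[swIdx p k]? = some x := by
      rw [getElem?_swap, swIdx_swIdx]; exact hx
    have hy' : (a ++ v :: u :: b)[i]? = some y := by
      rw [getElem?_swap]; exact hy
    by_cases hkp : k = p
    · subst hkp
      by_cases hjp : j = p
      · -- special case: j = p, k = p. x = u, y = v.
        subst hjp
        have hxu : x = u := by
          rw [getElem?_mid₀] at hx; exact (Option.some.inj hx).symm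
        have hyv : y = v := by
          rw [heq, getElem?_mid₀] at hy'
          exact (Option.some.inj hy').symm
        subst hxu; subst hyv
        exact Or.inr huv
      · -- generic: apply hmid at p+1
        have h1 : i < p + 1 := by
          have : swIdx p i < p := hk1
          unfold swIdx at this; split_ifs at this <;> omega
        have h2 : p + 1 < j := by
          have : p < swIdx p j := hk2
          unfold swIdx at this; split_ifs at this <;> omega
        have hxu : x = u := by
          rw [getElem?_mid₀] at hx; exact (Option.some.inj hx).symm
        rw [hxu]
        exact hmid (p + 1) h1 h2 u y (getElem?_mid₁ a b v u) hy'
    by_cases hkp1 : k = p + 1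
    · subst hkp1
      by_cases hip : i = p + 1
      · -- special case: i = p+1, k = p+1. y = u, x = v.
        subst hip
        have hyu : y = u := by
          rw [getElem?_mid₁] at hy'
          exact (Option.some.inj hy').symm
        have hxv : x = v := by
          rw [getElem?_mid₁] at hx; exact (Option.some.inj hx).symm
        subst hyu; subst hxv
        exact Or.inr huv.symm
      · have h1 : i < p := by
          have : swIdx p i < p + 1 := hk1
          unfold swIdx at this; split_ifs at this <;> omega
        have h2 : p < j := by
          have : p + 1 < swIdx p j := hk2
          unfold swIdx at this; split_ifs at this <;> omega
        have hxv : x = v := by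
          rw [getElem?_mid₁] at hx; exact (Option.some.inj hx).symm
        rw [hxv]
        exact hmid p h1 h2 v y (getElem?_mid₀ a b v u) hy'
    · have hsk : swIdx p k = k := by unfold swIdx; split_ifs <;> omega
      have h1 : i < k := by
        have := hk1
        unfold swIdx at this; split_ifs at this <;> omega
      have h2 : k < j := by
        have := hk2
        unfold swIdx at this; split_ifs at this <;> omega
      rw [hsk] at hx'
      exact hmid k h1 h2 x y hx' hy'

lemma Pbad_equiv (G : SimpleGraph V) {w w' : List V} (h : WordEquiv G w w')
    (hp : Pbad G w') : Pbad G w := by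
  induction h with
  | refl => exact hp
  | tail _ hs ih => exact ih (Pbad_swap G hs hp)

/-- for a vertex `v` and a `G`-reduced word `w`, exactly one of the following
holds: `v :: w` is `G`-reduced, or `w` is equivalent to a word beginning with `v`. -/
theorem reduced_prepend_dichotomy (G : SimpleGraph V) (v : V) (w : List V)
    (hw : IsGReduced G w) :
    Xor' (IsGReduced G (v :: w)) (∃ t : List V, WordEquiv G w (v :: t)) := by
  by_cases h : IsGReduced G (v :: w)
  · left
    refine ⟨h, ?_⟩
    rintro ⟨t, ht⟩
    have h1 : WordEquiv G (v :: w) (v :: v :: t) := wordEquiv_cons G v ht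
    have h2 : Pbad G (v :: v :: t) :=
      ⟨0, 1, by omega, by simp, by simp, fun k hk1 hk2 _ _ _ _ => by omega⟩
    exact (not_isGReduced_iff G _).mpr (Pbad_equiv G h1 h2) h
  · right
    refine ⟨?_, h⟩
    obtain ⟨i, j, hij, hj, heq, hmid⟩ := (not_isGReduced_iff G _).mp h
    have hjlen : j < w.length + 1 := by simpa using hj
    cases i with
    | succ i' =>
      obtain ⟨j', rfl⟩ : ∃ j', j = j' + 1 := ⟨j - 1, by omega⟩
      have hpb : Pbad G w := by
        refine ⟨i', j', by omega, by omega, ?_, ?_⟩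
        · simpa [List.getElem?_cons_succ] using heq
        · intro k hk1 hk2 x y hx hy
          exact hmid (k + 1) (by omega) (by omega) x y (by simpa) (by simpa)
      exact absurd hw (fun hr => (not_isGReduced_iff G w).mpr hpb hr)
    | zero =>
      obtain ⟨j', rfl⟩ : ∃ j', j = j' + 1 := ⟨j - 1, by omega⟩
      have hj'len : j' < w.length := by omega
      have hv : w[j']? = some v := by
        have := heq.symm
        simpa [List.getElem?_cons_succ, List.getElem?_cons_zero] using this
      have hall : ∀ k, k < j' → ∀ x, w[k]? = some x → (x = v ∨ G.Adj x v) := by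
        intro k hk x hx
        exact hmid (k + 1) (by omega) (by omega) x v (by simpa) (by simp)
      by_cases hex : ∃ k, k < j' ∧ w[k]? = some v
      · obtain ⟨k, hk, hkv⟩ := hex
        have hpb : Pbad G w := by
          refine ⟨k, j', hk, hj'len, hkv.trans hv.symm, ?_⟩
          intro t ht1 ht2 x y hx hy
          have hyv : y = v := by
            rw [hkv] at hy; exact (Option.some.inj hy).symm
          subst hyv
          exact hall t (by omega) x hx
        exact absurd hw (fun hr => (not_isGReduced_iff G w).mpr hpb hr)
      · push_neg at hex
        have hadj : ∀ y ∈ w.take j', G.Adj y v := by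
          intro y hy
          obtain ⟨n, hn, hny⟩ := List.mem_iff_getElem.mp hy
          have hnj : n < j' := by
            have := hn; rw [List.length_take] at this; omega
          have hwy : w[n]? = some y := by
            rw [List.getElem?_eq_getElem (by omega : n < w.length)]
            rw [← hny, List.getElem_take]
          rcases hall n hnj y hwy with h1 | h1
          · exact absurd (h1 ▸ hwy) (hex n hnj)
          · exact h1
        have hdecomp : w = w.take j' ++ v :: w.drop (j' + 1) := by
          conv_lhs => rw [← List.take_append_drop j' w]
          rw [List.drop_eq_getElem_cons hj'len]
          have : w[j'] = v := by
            have := hv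
            rw [List.getElem?_eq_getElem hj'len] at this
            exact Option.some.inj this
          rw [this]
        obtain ⟨t, ht⟩ := move_front G v (w.take j') (w.drop (j' + 1)) hadj
        exact ⟨t, hdecomp ▸ ht⟩
end
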